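/- A tight ground normal program (no positive cycle in the dependency graph) has the property that every model I of P satisfying the local foundedness condition (each atom justified by some rule with true positive body, false negative body) is an answer set; i.e., for tight programs local justification implies the existence of a level mapping. -/

import Mathlib

/-- A ground normal rule: at most one head atom, positive and negative body. -/
structure GRule (A : Type*) where
  head : Option A
  pos : Finset A
  neg : Finset A

/-- `I` satisfies a ground rule `r`. -/
def Satisfies {A : Type*} (I : Set A) (r : GRule A) : Prop :=
  (∃ a ∈ r.head, a ∈ I) ∨ ¬(↑r.pos ⊆ I) ∨ ∃ b ∈ r.neg, b ∈ I

/-- `J` is a model of the Gelfond–Lifschitz reduct `P^I`. -/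
def ModelsReduct {A : Type*} (P : Set (GRule A)) (I J : Set A) : Prop :=
  ∀ r ∈ P, (∀ b ∈ r.neg, b ∉ I) → ↑r.pos ⊆ J → ∃ a ∈ r.head, a ∈ J

/-- `I` is an answer set of `P`: a minimal model of the reduct `P^I`. -/
def IsAnswerSet {A : Type*} (P : Set (GRule A)) (I : Set A) : Prop :=
  ModelsReduct P I I ∧ ∀ J ⊂ I, ¬ ModelsReduct P I J

/-- Atom `a` is founded in `I` w.r.t. the level mapping `ψ`. -/
def Founded {A : Type*} (P : Set (GRule A)) (I : Set A) (ψ : A → ℕ) (a : A) : Prop :=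
  ∃ r ∈ P, r.head = some a ∧ ↑r.pos ⊆ I ∧ (∀ b ∈ r.neg, b ∉ I) ∧
    ∀ b ∈ r.pos, ψ b < ψ a

/-- Positive dependency edge of `P`: `b` occurs in the positive body of a rule with head `h`. -/
def PosEdge {A : Type*} (P : Set (GRule A)) (b h : A) : Prop :=
  ∃ r ∈ P, r.head = some h ∧ b ∈ r.pos

/-- For a tight ground normal program, every model in which each atom is locally justified
admits an injective level mapping witnessing foundedness, hence is an answer set. -/
theorem tight_supported_model_is_answer_set {A : Type*} (P : Set (GRule A))
    (htight : ∀ a, ¬ Relation.TransGen (PosEdge P) a a)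
    (I : Set A) (hI : I.Finite)
    (hmod : ∀ r ∈ P, Satisfies I r)
    (hjust : ∀ a ∈ I, ∃ r ∈ P, r.head = some a ∧ ↑r.pos ⊆ I ∧ ∀ b ∈ r.neg, b ∉ I) :
    ∃ ψ : A → ℕ, Set.InjOn ψ I ∧ (∀ a ∈ I, Founded P I ψ a) ∧ IsAnswerSet P I := by
  classical
  set T := hI.toFinset with hT
  set n := T.card with hn
  -- rank
  set rank : A → ℕ := fun a => (T.filter (fun b => Relation.TransGen (PosEdge P) b a)).card
    with hrank
  have hrank_lt : ∀ a ∈ I, ∀ b ∈ I, PosEdge P b a → rank b < rank a := by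
    intro a ha b hb hedge
    apply Finset.card_lt_card
    constructor
    · intro c hc
      simp only [Finset.mem_filter] at hc ⊢
      exact ⟨hc.1, hc.2.tail hedge⟩
    · intro hsub
      have hb' : b ∈ T.filter (fun c => Relation.TransGen (PosEdge P) c a) := by
        simp only [Finset.mem_filter, hT, Set.Finite.mem_toFinset]
        exact ⟨hb, Relation.TransGen.single hedge⟩
      have := hsub hb'
      simp only [Finset.mem_filter] at this
      exact htight b this.2
  -- index
  set l := T.toList with hl
  set idx : A → ℕ := fun a => l.idxOf a with hidx
  have hidx_lt : ∀ a ∈ I, idx a < n := by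
    intro a ha
    have : a ∈ l := by simp [hl, hT, Set.Finite.mem_toFinset, ha]
    have := List.idxOf_lt_length_iff.2 this
    simpa [hidx, hn, hl] using this
  have hidx_inj : ∀ a ∈ I, ∀ b ∈ I, idx a = idx b → a = b := by
    intro a ha b hb h
    have ha' : a ∈ l := by simp [hl, hT, Set.Finite.mem_toFinset, ha]
    have hb' : b ∈ l := by simp [hl, hT, Set.Finite.mem_toFinset, hb]
    have := List.idxOf_inj (y := b) ha'
    exact this.1 h
  set ψ : A → ℕ := fun a => (n + 1) * rank a + idx a with hψ
  have hmono : ∀ a ∈ I, ∀ b ∈ I, PosEdge P b a → ψ b < ψ a := by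
    intro a ha b hb hedge
    have h1 := hrank_lt a ha b hb hedge
    have h2 := hidx_lt b hb
    have h3 := hidx_lt a ha
    simp only [hψ]
    nlinarith
  have hinj : Set.InjOn ψ I := by
    intro a ha b hb h
    have h2 := hidx_lt b hb
    have h3 := hidx_lt a ha
    have hr : rank a = rank b := by
      by_contra hne
      rcases Nat.lt_or_ge (rank a) (rank b) with hlt | hge
      · simp only [hψ] at h; nlinarith
      · have : rank b < rank a := lt_of_le_of_ne hge (Ne.symm hne)
        simp only [hψ] at h; nlinarith
    have : idx a = idx b := by simp only [hψ, hr] at h; omega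
    exact hidx_inj a ha b hb this
  have hfound : ∀ a ∈ I, Founded P I ψ a := by
    intro a ha
    obtain ⟨r, hrP, hhead, hpos, hneg⟩ := hjust a ha
    refine ⟨r, hrP, hhead, hpos, hneg, ?_⟩
    intro b hb
    exact hmono a ha b (hpos hb) ⟨r, hrP, hhead, hb⟩
  have hmr : ModelsReduct P I I := by
    intro r hrP hneg hpos
    rcases hmod r hrP with h | h | h
    · exact h
    · exact absurd hpos h
    · obtain ⟨b, hb, hbI⟩ := h; exact absurd hbI (hneg b hb)
  refine ⟨ψ, hinj, hfound, hmr, ?_⟩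
  intro J hJ hJmr
  obtain ⟨a, haI, haJ⟩ := Set.exists_of_ssubset hJ
  -- pick minimal ψ in I \ J
  have hne : (I \ J).Nonempty := ⟨a, haI, haJ⟩
  have hfin : (I \ J).Finite := hI.subset (Set.diff_subset)
  obtain ⟨m, hm, hmin⟩ := hfin.exists_minimalFor ψ _ hne
  obtain ⟨r, hrP, hhead, hpos, hneg, hlev⟩ := hfound m hm.1
  have hposJ : ↑r.pos ⊆ J := by
    intro b hb
    have hbI : b ∈ I := hpos hb
    by_contra hbJ
    have hbd : b ∈ I \ J := ⟨hbI, hbJ⟩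
    have := hmin hbd (le_of_lt (hlev b hb))
    exact absurd (hlev b hb) (by omega)
  obtain ⟨c, hc, hcJ⟩ := hJmr r hrP hneg hposJ
  rw [hhead] at hc
  simp only [Option.mem_def, Option.some.injEq] at hc
  subst hc
  exact hm.2 hcJ
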